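/- If R is a CCR ring and I is a two-sided ideal of R, then the quotient ring R/I is a CCR ring. -/

import Mathlib

/-- A ring is (left) primitive if it admits a faithful simple left module. -/
def IsPrimitiveRing (R : Type u) [Ring R] : Prop :=
  ∃ (M : Type u) (_ : AddCommGroup M) (_ : Module R M), IsSimpleModule R M ∧ FaithfulSMul R M

/-- A ring has a minimal left ideal if there is an atom in its lattice of left ideals. -/
def HasMinimalLeftIdeal (R : Type u) [Ring R] : Prop :=
  ∃ L : Submodule R R, IsAtom L

/-- A ring is CCR if every primitive quotient is a simple ring with a minimal left ideal. -/
def IsCCRRing (R : Type u) [Ring R] : Prop :=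
  ∀ P : TwoSidedIdeal R, IsPrimitiveRing P.ringCon.Quotient →
    IsSimpleRing P.ringCon.Quotient ∧ HasMinimalLeftIdeal P.ringCon.Quotient

section Aux

variable {A B : Type u} [Ring A] [Ring B]

/-- Transferring a primitive ring structure along a ring isomorphism. -/
theorem IsPrimitiveRing.of_ringEquiv (e : A ≃+* B) (h : IsPrimitiveRing A) :
    IsPrimitiveRing B := by
  obtain ⟨M, _, _, hsimple, hfaith⟩ := h
  letI : Module B M := Module.compHom M (e.symm : B →+* A)
  haveI := RingHomInvPair.of_ringEquiv e
  haveI := RingHomInvPair.symm (e : A →+* B) (e.symm : B →+* A)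
  have hsmul : ∀ (b : B) (m : M), b • m = e.symm b • m := fun _ _ => rfl
  let sl : M ≃ₛₗ[(e : A →+* B)] M :=
    { Equiv.refl M with
      map_add' := fun _ _ => rfl
      map_smul' := fun a m => by
        show a • m = e a • m
        rw [hsmul (e a) m, e.symm_apply_apply] }
  refine ⟨M, inferInstance, inferInstance, ?_, ?_⟩
  · have := (Submodule.orderIsoMapComap sl).isSimpleOrder_iff.mp
      ((isSimpleModule_iff A M).mp hsimple)
    exact (isSimpleModule_iff B M).mpr this
  · refine ⟨fun {b₁ b₂} hb => ?_⟩
    have : e.symm b₁ = e.symm b₂ :=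
      eq_of_smul_eq_smul (M := A) (α := M) (fun m => by rw [← hsmul, ← hsmul]; exact hb m)
    exact e.symm.injective this

theorem HasMinimalLeftIdeal.of_ringEquiv (e : A ≃+* B) (h : HasMinimalLeftIdeal A) :
    HasMinimalLeftIdeal B := by
  obtain ⟨L, hL⟩ := h
  haveI := RingHomInvPair.of_ringEquiv e
  haveI := RingHomInvPair.symm (e : A →+* B) (e.symm : B →+* A)
  exact ⟨Submodule.orderIsoMapComap e.toSemilinearEquiv L,
    ((Submodule.orderIsoMapComap e.toSemilinearEquiv).isAtom_iff L).mpr hL⟩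

/-- The order isomorphism on two-sided ideals induced by a ring isomorphism. -/
noncomputable def twoSidedIdealOrderIso (e : A ≃+* B) :
    TwoSidedIdeal A ≃o TwoSidedIdeal B where
  toFun J := J.comap (e.symm : B →+* A)
  invFun J := J.comap (e : A →+* B)
  left_inv J := by
    refine TwoSidedIdeal.ext fun x => ?_
    simp [TwoSidedIdeal.mem_comap]
  right_inv J := by
    refine TwoSidedIdeal.ext fun x => ?_
    simp [TwoSidedIdeal.mem_comap]
  map_rel_iff' := by
    intro J J'
    constructor
    · intro h x hx
      have := h (show e x ∈ J.comap (e.symm : B →+* A) from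
        (TwoSidedIdeal.mem_comap (e.symm : B →+* A)).mpr (by simpa using hx))
      simpa using (TwoSidedIdeal.mem_comap (e.symm : B →+* A)).mp this
    · intro h x hx
      exact (TwoSidedIdeal.mem_comap (e.symm : B →+* A)).mpr
        (h ((TwoSidedIdeal.mem_comap (e.symm : B →+* A)).mp hx))

theorem IsSimpleRing.of_ringEquiv' (e : A ≃+* B) (h : IsSimpleRing A) : IsSimpleRing B :=
  ⟨(twoSidedIdealOrderIso e).symm.isSimpleOrder_iff.mpr h.simple⟩

/-- The quotient of `S` by a congruence `c`, with `f : R →+* S` surjective, is isomorphic to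
the quotient of `R` by the pullback congruence. -/
noncomputable def quotCompRingEquiv {R S : Type*} [Ring R] [Ring S] (f : R →+* S)
    (hf : Function.Surjective f) (c : RingCon S) :
    (c.comap f).Quotient ≃+* c.Quotient := by
  refine RingEquiv.ofBijective
    ({ toFun := Quotient.map' f (fun a b h => h)
       map_one' := by show ((f 1 : S) : c.Quotient) = 1; rw [map_one]; rfl
       map_mul' := fun x y => by
         refine Quotient.inductionOn₂' x y fun a b => ?_
         show ((f (a * b) : S) : c.Quotient) = (f a : c.Quotient) * (f b : c.Quotient)
         rw [map_mul]; rfl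
       map_zero' := by show ((f 0 : S) : c.Quotient) = 0; rw [map_zero]; rfl
       map_add' := fun x y => by
         refine Quotient.inductionOn₂' x y fun a b => ?_
         show ((f (a + b) : S) : c.Quotient) = (f a : c.Quotient) + (f b : c.Quotient)
         rw [map_add]; rfl } : (c.comap f).Quotient →+* c.Quotient) ?_
  constructor
  · intro x y
    refine Quotient.inductionOn₂' x y fun a b h => ?_
    have : c (f a) (f b) := c.eq.mp h
    exact Quotient.sound' this
  · intro y
    refine Quotient.inductionOn' y fun s => ?_
    obtain ⟨r, hr⟩ := hf s
    exact ⟨(r : (c.comap f).Quotient), by show ((f r : S) : c.Quotient) = _; rw [hr]; rfl⟩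

end Aux

/-- If `R` is a CCR ring and `I` is a two-sided ideal of `R`, then `R/I` is CCR. -/
theorem quotient_isCCRRing (R : Type u) [Ring R] (hR : IsCCRRing R) (I : TwoSidedIdeal R) :
    IsCCRRing I.ringCon.Quotient := by
  intro P hprim
  set π : R →+* I.ringCon.Quotient := I.ringCon.mk' with hπ
  have hπs : Function.Surjective π := Quotient.mk''_surjective
  set Q : TwoSidedIdeal R := ⟨P.ringCon.comap π⟩ with hQdef
  have e : Q.ringCon.Quotient ≃+* P.ringCon.Quotient := quotCompRingEquiv π hπs P.ringCon
  obtain ⟨hsimp, hmin⟩ := hR Q (IsPrimitiveRing.of_ringEquiv e.symm hprim)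
  exact ⟨IsSimpleRing.of_ringEquiv' e hsimp, HasMinimalLeftIdeal.of_ringEquiv e hmin⟩
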